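/- Let $\mathcal{Z}$ be the commutative $\mathbb{Z}$-algebra generated by $z_{i,a}, z_{\bar{i},a}$ ($1\le i\le n$, $a\in\mathbb{C}$) subject to the relations $z_{i,a} z_{\bar{i}, a-2n+2i-4} = z_{i-1,a} z_{\overline{i-1}, a-2n+2i-4}$ for $i = 1, \dots, n$ (with $z_{0,a} = z_{\bar{0},a} = 1$). Then $\mathcal{Z}$ is isomorphic as a ring to the Laurent polynomial ring $\mathcal{Y} = \mathbb{Z}[Y_{i,a}^{\pm 1}]_{1\le i\le n, a\in\mathbb{C}}$, via $z_{i,a} \mapsto Y_{i,a+i-1} Y_{i-1,a+i}^{-1}$ and $z_{\bar{i},a} \mapsto Y_{i-1,a+2n-i+2} Y_{i,a+2n-i+3}^{-1}$ (with $Y_{0,a} = 1$). -/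

import Mathlib

/-!
STATEMENT 11: The commutative ring `𝒵` generated by `z_{i,a}, z_{ī,a}`
(`1 ≤ i ≤ n`, `a ∈ ℂ`) with relations
`z_{i,a} z_{ī, a-2n+2i-4} = z_{i-1,a} z_{\overline{i-1}, a-2n+2i-4}`
(`z_{0,a} = z_{0̄,a} = 1`) is isomorphic to the Laurent polynomial ring
`𝒴 = ℤ[Y_{i,a}^{±1}]` via `z_{i,a} ↦ Y_{i,a+i-1} Y_{i-1,a+i}^{-1}` and
`z_{ī,a} ↦ Y_{i-1,a+2n-i+2} Y_{i,a+2n-i+3}^{-1}` (`Y_{0,a} = 1`).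
Here indices `i : Fin n` encode the value `i+1 ∈ {1, …, n}`.
-/

open MvPolynomial

/-- Generators `z_{i,a}` (`Sum.inl i` for `z_{i+1,a}`, `Sum.inr i` for
`z_{\overline{i+1},a}`). -/
abbrev CnGen (n : ℕ) : Type := (Fin n ⊕ Fin n) × ℂ

/-- The set of defining relations of `𝒵` (type `Cₙ`). -/
noncomputable def CnRel (n : ℕ) : Set (MvPolynomial (CnGen n) ℤ) :=
  { p | ∃ (i : Fin n) (a : ℂ),
      p = X (Sum.inl i, a) * X (Sum.inr i, a - 2 * n + 2 * (i : ℕ) - 2) -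
        (if h : (i : ℕ) = 0 then 1 else
          X (Sum.inl ⟨(i : ℕ) - 1, by have := i.isLt; omega⟩, a) *
            X (Sum.inr ⟨(i : ℕ) - 1, by have := i.isLt; omega⟩,
              a - 2 * n + 2 * (i : ℕ) - 2)) }

/-- The ring `𝒵`. -/
abbrev CnZ (n : ℕ) : Type := MvPolynomial (CnGen n) ℤ ⧸ Ideal.span (CnRel n)

/-- The Laurent polynomial ring `𝒴 = ℤ[Y_{i,a}^{±1}]`, as the group algebra
of the free abelian group on the symbols `Y_{i,a}` (`i : Fin n` encoding
`i+1`, `a : ℂ`). -/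
abbrev CnY (n : ℕ) : Type := AddMonoidAlgebra ℤ ((Fin n × ℂ) →₀ ℤ)

/-- The Laurent monomial with exponent vector `g`. -/
noncomputable def Ymon (n : ℕ) (g : (Fin n × ℂ) →₀ ℤ) : CnY n :=
  AddMonoidAlgebra.single g 1

namespace CnAux

variable (n : ℕ)

noncomputable def zmk (g : CnGen n) : CnZ n := Ideal.Quotient.mk _ (X g)

noncomputable def EexpL (i : Fin n) (a : ℂ) : (Fin n × ℂ) →₀ ℤ :=
  Finsupp.single (i, a + (i : ℕ)) 1 -
    (if h : (i : ℕ) = 0 then 0 else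
      Finsupp.single ((⟨(i : ℕ) - 1, by have := i.isLt; omega⟩ : Fin n),
        a + (i : ℕ) + 1) 1)

noncomputable def EexpR (i : Fin n) (a : ℂ) : (Fin n × ℂ) →₀ ℤ :=
  (if h : (i : ℕ) = 0 then 0 else
      Finsupp.single ((⟨(i : ℕ) - 1, by have := i.isLt; omega⟩ : Fin n),
        a + 2 * n - (i : ℕ) + 1) 1) -
    Finsupp.single (i, a + 2 * n - (i : ℕ) + 2) 1

noncomputable def Eexp : CnGen n → ((Fin n × ℂ) →₀ ℤ) := fun g =>
  match g.1 with
  | Sum.inl i => EexpL n i g.2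
  | Sum.inr i => EexpR n i g.2

@[simp] lemma Eexp_inl (i : Fin n) (a : ℂ) : Eexp n (Sum.inl i, a) = EexpL n i a := rfl
@[simp] lemma Eexp_inr (i : Fin n) (a : ℂ) : Eexp n (Sum.inr i, a) = EexpR n i a := rfl

lemma Ymon_mul (g h : (Fin n × ℂ) →₀ ℤ) : Ymon n g * Ymon n h = Ymon n (g + h) := by
  simp [Ymon, AddMonoidAlgebra.single_mul_single]

lemma Ymon_zero : Ymon n 0 = 1 := rfl

/-- The map `𝒵`-presentation → `𝒴` on the polynomial ring. -/
noncomputable def phi0 : MvPolynomial (CnGen n) ℤ →+* CnY n :=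
  eval₂Hom (Int.castRingHom (CnY n)) (fun g => Ymon n (Eexp n g))

lemma Eexp_sum (i : Fin n) (a : ℂ) :
    EexpL n i a + EexpR n i (a - 2 * n + 2 * (i : ℕ) - 2) =
      if h : (i : ℕ) = 0 then 0 else
        EexpL n ⟨(i : ℕ) - 1, by have := i.isLt; omega⟩ a +
          EexpR n ⟨(i : ℕ) - 1, by have := i.isLt; omega⟩
            (a - 2 * n + 2 * (i : ℕ) - 2) := by
  by_cases h : (i : ℕ) = 0
  · rw [dif_pos h]
    simp only [EexpL, EexpR, dif_pos h]
    rw [show a - 2*(n:ℂ) + 2*((i:ℕ):ℂ) - 2 + 2*(n:ℂ) - ((i:ℕ):ℂ) + 2 = a + ((i:ℕ):ℂ) from by ring]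
    abel
  · rw [dif_neg h]
    obtain ⟨j, hj⟩ : ∃ j, (i : ℕ) = j + 1 := ⟨(i:ℕ) - 1, by omega⟩
    simp only [EexpL, EexpR, hj, Nat.add_sub_cancel, Fin.val_mk, Nat.cast_add, Nat.cast_one,
      Nat.add_eq_zero, one_ne_zero, and_false, dif_neg, not_false_iff]
    by_cases hj0 : j = 0
    · simp only [dif_pos hj0, hj0, Nat.cast_zero]
      rw [show a - 2*(n:ℂ) + 2*((0:ℂ)+1) - 2 + 2*(n:ℂ) - ((0:ℂ)+1) + 1 = a + (0:ℂ) + 1 - 1 from by ring,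
        show a - 2*(n:ℂ) + 2*((0:ℂ)+1) - 2 + 2*(n:ℂ) - ((0:ℂ)+1) + 2 = a + ((0:ℂ)+1) from by ring,
        show a - 2*(n:ℂ) + 2*((0:ℂ)+1) - 2 + 2*(n:ℂ) - (0:ℂ) + 2 = a + (0:ℂ) + 1 + 1 from by ring,
        show a + (0:ℂ) + 1 - 1 = a + (0:ℂ) from by ring]
      abel
    · simp only [dif_neg hj0]
      rw [show a - 2*(n:ℂ) + 2*((j:ℂ)+1) - 2 + 2*(n:ℂ) - ((j:ℂ)+1) + 1 = a + (j:ℂ) from by ring,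
        show a - 2*(n:ℂ) + 2*((j:ℂ)+1) - 2 + 2*(n:ℂ) - ((j:ℂ)+1) + 2 = a + ((j:ℂ)+1) from by ring,
        show a - 2*(n:ℂ) + 2*((j:ℂ)+1) - 2 + 2*(n:ℂ) - (j:ℂ) + 1 = a + (j:ℂ) + 1 from by ring,
        show a - 2*(n:ℂ) + 2*((j:ℂ)+1) - 2 + 2*(n:ℂ) - (j:ℂ) + 2 = a + ((j:ℂ)+1) + 1 from by ring]
      abel

lemma phi0_rel : ∀ p ∈ CnRel n, phi0 n p = 0 := by
  rintro p ⟨i, a, rfl⟩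
  have h1 : phi0 n (X (Sum.inl i, a) * X (Sum.inr i, a - 2 * n + 2 * (i : ℕ) - 2)) =
      Ymon n (EexpL n i a + EexpR n i (a - 2 * n + 2 * (i : ℕ) - 2)) := by
    simp [phi0, Ymon_mul]
  rw [map_sub, h1, Eexp_sum, sub_eq_zero]
  split_ifs with h
  · simp [phi0, Ymon_zero]
  · simp [phi0, Ymon_mul]

/-- `phi0` descends to the quotient. -/
noncomputable def phiZ : CnZ n →+* CnY n :=
  Ideal.Quotient.lift _ (phi0 n) (fun p hp => by
    have hle : Ideal.span (CnRel n) ≤ RingHom.ker (phi0 n) :=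
      Ideal.span_le.mpr (fun q hq => (RingHom.mem_ker).mpr (phi0_rel n q hq))
    exact (RingHom.mem_ker).mp (hle hp))

@[simp] lemma phiZ_zmk (g : CnGen n) : phiZ n (zmk n g) = Ymon n (Eexp n g) := by
  simp [phiZ, zmk, phi0]

lemma zmk_rel (i : Fin n) (a : ℂ) :
    zmk n (Sum.inl i, a) * zmk n (Sum.inr i, a - 2 * n + 2 * (i : ℕ) - 2) =
      if h : (i : ℕ) = 0 then 1 else
        zmk n (Sum.inl ⟨(i : ℕ) - 1, by have := i.isLt; omega⟩, a) *
          zmk n (Sum.inr ⟨(i : ℕ) - 1, by have := i.isLt; omega⟩,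
            a - 2 * n + 2 * (i : ℕ) - 2) := by
  have hmem : (X (Sum.inl i, a) * X (Sum.inr i, a - 2 * n + 2 * (i : ℕ) - 2) -
        (if h : (i : ℕ) = 0 then 1 else
          X (Sum.inl ⟨(i : ℕ) - 1, by have := i.isLt; omega⟩, a) *
            X (Sum.inr ⟨(i : ℕ) - 1, by have := i.isLt; omega⟩,
              a - 2 * n + 2 * (i : ℕ) - 2)) : MvPolynomial (CnGen n) ℤ)
      ∈ Ideal.span (CnRel n) := Ideal.subset_span ⟨i, a, rfl⟩
  have h0 := (Ideal.Quotient.eq_zero_iff_mem).mpr hmem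
  rw [map_sub, sub_eq_zero, map_mul] at h0
  rw [show (zmk n (Sum.inl i, a) * zmk n (Sum.inr i, a - 2 * n + 2 * (i : ℕ) - 2)) =
    Ideal.Quotient.mk _ (X (Sum.inl i, a)) * Ideal.Quotient.mk _
      (X (Sum.inr i, a - 2 * n + 2 * (i : ℕ) - 2)) from rfl, h0]
  split_ifs with h
  · simp
  · simp [zmk]

lemma isUnit_zmk_aux : ∀ (k : ℕ) (i : Fin n), (i : ℕ) = k → ∀ a : ℂ,
    IsUnit (zmk n (Sum.inl i, a)) ∧ IsUnit (zmk n (Sum.inr i, a)) := by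
  intro k
  induction k with
  | zero =>
    intro i hi a
    constructor
    · have h := zmk_rel n i a
      rw [dif_pos hi] at h
      exact IsUnit.of_mul_eq_one _ h
    · have h := zmk_rel n i (a + 2 * n - 2 * ((i:ℕ):ℂ) + 2)
      rw [dif_pos hi, show a + 2 * (n:ℂ) - 2 * ((i:ℕ):ℂ) + 2 - 2 * (n:ℂ) + 2 * ((i:ℕ):ℂ) - 2
        = a from by ring] at h
      exact IsUnit.of_mul_eq_one _ ((mul_comm _ _).trans h)
  | succ j ih =>
    intro i hi a
    have hlt : (i : ℕ) - 1 < n := by have := i.isLt; omega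
    have hi' : ((⟨(i:ℕ) - 1, hlt⟩ : Fin n) : ℕ) = j := by simp [hi]
    constructor
    · have h := zmk_rel n i a
      rw [dif_neg (by omega)] at h
      have hu : IsUnit (zmk n (Sum.inl i, a) *
          zmk n (Sum.inr i, a - 2 * n + 2 * (i:ℕ) - 2)) := by
        rw [h]
        exact ((ih _ hi' a).1).mul ((ih _ hi' _).2)
      exact isUnit_of_mul_isUnit_left hu
    · have h := zmk_rel n i (a + 2 * n - 2 * ((i:ℕ):ℂ) + 2)
      rw [dif_neg (by omega), show a + 2 * (n:ℂ) - 2 * ((i:ℕ):ℂ) + 2 - 2 * (n:ℂ) +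
        2 * ((i:ℕ):ℂ) - 2 = a from by ring] at h
      have hu : IsUnit (zmk n (Sum.inl i, a + 2 * n - 2 * ((i:ℕ):ℂ) + 2) *
          zmk n (Sum.inr i, a)) := by
        rw [h]
        exact ((ih _ hi' _).1).mul ((ih _ hi' _).2)
      exact isUnit_of_mul_isUnit_right hu

lemma isUnit_zmk (i : Fin n) (a : ℂ) :
    IsUnit (zmk n (Sum.inl i, a)) ∧ IsUnit (zmk n (Sum.inr i, a)) :=
  isUnit_zmk_aux n (i : ℕ) i rfl a

noncomputable def wElt : ℕ → ℂ → CnZ n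
  | 0, _ => 1
  | (i+1), a => wElt i (a+1) * (if h : i < n then zmk n (Sum.inl ⟨i, h⟩, a - i) else 1)

@[simp] lemma wElt_zero (a : ℂ) : wElt n 0 a = 1 := rfl

lemma wElt_succ (i : ℕ) (a : ℂ) :
    wElt n (i+1) a = wElt n i (a+1) *
      (if h : i < n then zmk n (Sum.inl ⟨i, h⟩, a - i) else 1) := rfl

lemma isUnit_wElt (i : ℕ) (a : ℂ) : IsUnit (wElt n i a) := by
  induction i generalizing a with
  | zero => simp
  | succ j ih =>
    rw [wElt_succ]
    refine (ih _).mul ?_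
    split_ifs with h
    · exact (isUnit_zmk n ⟨j, h⟩ _).1
    · exact isUnit_one

noncomputable def wUnit (i : ℕ) (a : ℂ) : (CnZ n)ˣ := (isUnit_wElt n i a).unit

@[simp] lemma wUnit_val (i : ℕ) (a : ℂ) : (wUnit n i a : CnZ n) = wElt n i a :=
  IsUnit.unit_spec _

lemma zmk_rel' (i : Fin n) (b : ℂ) :
    zmk n (Sum.inl i, b + 2 * n - 2 * (i : ℕ) + 2) * zmk n (Sum.inr i, b) =
      if h : (i : ℕ) = 0 then 1 else
        zmk n (Sum.inl ⟨(i : ℕ) - 1, by have := i.isLt; omega⟩,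
            b + 2 * n - 2 * (i : ℕ) + 2) *
          zmk n (Sum.inr ⟨(i : ℕ) - 1, by have := i.isLt; omega⟩, b) := by
  have h := zmk_rel n i (b + 2 * n - 2 * (i : ℕ) + 2)
  rw [show b + 2 * (n:ℂ) - 2 * ((i:ℕ):ℂ) + 2 - 2 * (n:ℂ) + 2 * ((i:ℕ):ℂ) - 2 = b
    from by ring] at h
  exact h

lemma zmk_rel_zero (h0 : 0 < n) (b : ℂ) :
    zmk n (Sum.inl ⟨0, h0⟩, b + 2 * n + 2) * zmk n (Sum.inr ⟨0, h0⟩, b) = 1 := by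
  have h := zmk_rel' n ⟨0, h0⟩ b
  rw [dif_pos rfl] at h
  rw [show b + 2 * (n:ℂ) + 2 = b + 2 * (n:ℂ) - 2 * (((⟨0, h0⟩ : Fin n) : ℕ) : ℂ) + 2
    from by simp]
  exact h

lemma zmk_rel_succ (k : ℕ) (h1 : k + 1 < n) (h0 : k < n) (b : ℂ) :
    zmk n (Sum.inl ⟨k+1, h1⟩, b + 2 * n - 2 * ((k:ℂ)+1) + 2) *
        zmk n (Sum.inr ⟨k+1, h1⟩, b) =
      zmk n (Sum.inl ⟨k, h0⟩, b + 2 * n - 2 * ((k:ℂ)+1) + 2) *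
        zmk n (Sum.inr ⟨k, h0⟩, b) := by
  have h := zmk_rel' n ⟨k+1, h1⟩ b
  rw [dif_neg (Nat.succ_ne_zero k)] at h
  rw [show b + 2 * (n:ℂ) - 2 * ((k:ℂ)+1) + 2
      = b + 2 * (n:ℂ) - 2 * (((⟨k+1, h1⟩ : Fin n) : ℕ) : ℂ) + 2 from by push_cast; ring]
  exact h

lemma wElt_inr (k : ℕ) (h : k < n) (a : ℂ) :
    wElt n k (a + 2 * n - k + 1) =
      zmk n (Sum.inr ⟨k, h⟩, a) * wElt n (k+1) (a + 2 * n - k + 2) := by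
  induction k generalizing a with
  | zero =>
    rw [wElt_succ, dif_pos h, wElt_zero, wElt_zero, one_mul]
    rw [show a + 2 * (n:ℂ) - ((0:ℕ):ℂ) + 2 - ((0:ℕ):ℂ) = a + 2 * n + 2 from by push_cast; ring]
    rw [mul_comm]
    exact (zmk_rel_zero n h a).symm
  | succ j ih =>
    have hj : j < n := by omega
    rw [wElt_succ n (j+1), dif_pos h, wElt_succ n j, dif_pos hj]
    rw [show a + 2 * (n:ℂ) - ((j+1 : ℕ):ℂ) + 1 + 1 = a + 2 * (n:ℂ) - (j:ℂ) + 1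
      from by push_cast; ring]
    rw [ih hj a]
    rw [show a + 2 * (n:ℂ) - ((j+1 : ℕ):ℂ) + 2 + 1 = a + 2 * (n:ℂ) - (j:ℂ) + 2
      from by push_cast; ring]
    rw [show a + 2 * (n:ℂ) - ((j+1 : ℕ):ℂ) + 1 - (j:ℂ) = a + 2 * (n:ℂ) - 2 * ((j:ℂ)+1) + 2
      from by push_cast; ring]
    rw [show a + 2 * (n:ℂ) - ((j+1 : ℕ):ℂ) + 2 - ((j+1 : ℕ):ℂ) = a + 2 * (n:ℂ) - 2 * ((j:ℂ)+1) + 2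
      from by push_cast; ring]
    linear_combination (-(wElt n (j+1) (a + 2 * (n:ℂ) - (j:ℂ) + 2))) *
      zmk_rel_succ n j h hj a

lemma phiZ_wElt (k : ℕ) (hk : k ≤ n) (a : ℂ) :
    phiZ n (wElt n k a) =
      Ymon n (if h : k = 0 then 0
        else Finsupp.single ((⟨k - 1, by omega⟩ : Fin n), a) 1) := by
  induction k generalizing a with
  | zero => rw [dif_pos rfl, wElt_zero, map_one, Ymon_zero]
  | succ j ih =>
    have hj : j < n := by omega
    rw [wElt_succ, dif_pos hj, map_mul, ih (by omega), phiZ_zmk, Eexp_inl, EexpL,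
      dif_neg (Nat.succ_ne_zero j), Ymon_mul]
    congr 1
    simp only [Fin.val_mk]
    rw [show a - (j:ℂ) + (j:ℂ) = a from by ring]
    rw [show (⟨j + 1 - 1, by omega⟩ : Fin n) = ⟨j, hj⟩ from rfl]
    abel

noncomputable def Fhom : ((Fin n × ℂ) →₀ ℤ) →+ Additive (CnZ n)ˣ :=
  Finsupp.liftAddHom (α := Fin n × ℂ) (M := ℤ) (N := Additive (CnZ n)ˣ) fun p =>
    (zmultiplesHom (Additive (CnZ n)ˣ)) (Additive.ofMul (wUnit n ((p.1 : ℕ) + 1) p.2))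

@[simp] lemma Fhom_single (p : Fin n × ℂ) (m : ℤ) :
    Fhom n (Finsupp.single p m) = m • Additive.ofMul (wUnit n ((p.1 : ℕ) + 1) p.2) := by
  simp [Fhom]

noncomputable def psi : CnY n →ₐ[ℤ] CnZ n :=
  AddMonoidAlgebra.lift ℤ _ _
    ((Units.coeHom (CnZ n)).comp (AddMonoidHom.toMultiplicativeLeft (Fhom n)))

lemma psi_Ymon (g : (Fin n × ℂ) →₀ ℤ) :
    psi n (Ymon n g) = ((Fhom n g).toMul : (CnZ n)ˣ) := by
  simp [psi, Ymon, AddMonoidAlgebra.lift_single, AddMonoidHom.toMultiplicativeLeft]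
  rfl

lemma psi_phi_inl (i : Fin n) (a : ℂ) :
    psi n (Ymon n (EexpL n i a)) = zmk n (Sum.inl i, a) := by
  obtain ⟨k, hk⟩ := i
  rw [EexpL]
  simp only [Fin.val_mk]
  match k, hk with
  | 0, hk =>
    rw [dif_pos rfl, sub_zero, psi_Ymon]
    simp only [Fhom_single, one_zsmul, toMul_ofMul, wUnit_val, Fin.val_mk]
    rw [wElt_succ, dif_pos hk, wElt_zero, one_mul,
      show a + ((0:ℕ):ℂ) - ((0:ℕ):ℂ) = a from by ring]
  | (j+1), hk =>
    rw [dif_neg (Nat.succ_ne_zero j), psi_Ymon, map_sub]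
    simp only [Fhom_single, one_zsmul, toMul_sub, toMul_ofMul, div_eq_mul_inv,
      Units.val_mul, Fin.val_mk, Nat.add_sub_cancel]
    rw [Units.mul_inv_eq_iff_eq_mul, wUnit_val, wUnit_val]
    rw [wElt_succ n (j+1), dif_pos hk,
      show a + ((j+1:ℕ):ℂ) - ((j+1:ℕ):ℂ) = a from by ring]
    ring

lemma psi_phi_inr (i : Fin n) (a : ℂ) :
    psi n (Ymon n (EexpR n i a)) = zmk n (Sum.inr i, a) := by
  obtain ⟨k, hk⟩ := i
  rw [EexpR]
  simp only [Fin.val_mk]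
  match k, hk with
  | 0, hk =>
    rw [dif_pos rfl, zero_sub, psi_Ymon, map_neg]
    simp only [Fhom_single, one_zsmul, toMul_neg, toMul_ofMul, Fin.val_mk]
    apply Units.inv_eq_of_mul_eq_one_left
    rw [wUnit_val]
    have h := wElt_inr n 0 hk a
    rw [wElt_zero] at h
    exact h.symm
  | (j+1), hk =>
    rw [dif_neg (Nat.succ_ne_zero j), psi_Ymon, map_sub]
    simp only [Fhom_single, one_zsmul, toMul_sub, toMul_ofMul, div_eq_mul_inv,
      Units.val_mul, Fin.val_mk, Nat.add_sub_cancel]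
    rw [Units.mul_inv_eq_iff_eq_mul, wUnit_val, wUnit_val]
    exact wElt_inr n (j+1) hk a
noncomputable def YmonUnit (g : (Fin n × ℂ) →₀ ℤ) : (CnY n)ˣ where
  val := Ymon n g
  inv := Ymon n (-g)
  val_inv := by rw [Ymon_mul, add_neg_cancel, Ymon_zero]
  inv_val := by rw [Ymon_mul, neg_add_cancel, Ymon_zero]

noncomputable def Thom : ((Fin n × ℂ) →₀ ℤ) →+ Additive (CnY n)ˣ :=
  AddMonoidHom.mk'
    (fun g => Additive.ofMul (Units.map (phiZ n).toMonoidHom ((Fhom n g).toMul)))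
    (by intro x y
        simp only [map_add, toMul_add, map_mul, ofMul_mul])

noncomputable def Shom : ((Fin n × ℂ) →₀ ℤ) →+ Additive (CnY n)ˣ :=
  AddMonoidHom.mk' (fun g => Additive.ofMul (YmonUnit n g))
    (by intro x y
        have h : YmonUnit n (x + y) = YmonUnit n x * YmonUnit n y :=
          Units.ext (by simp [YmonUnit, Ymon_mul])
        show Additive.ofMul (YmonUnit n (x + y))
          = Additive.ofMul (YmonUnit n x) + Additive.ofMul (YmonUnit n y)
        rw [h, ofMul_mul])

lemma Thom_eq_Shom : Thom n = Shom n := by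
  apply Finsupp.addHom_ext'
  intro p
  apply AddMonoidHom.ext_int
  show Thom n (Finsupp.single p 1) = Shom n (Finsupp.single p 1)
  show Additive.ofMul (Units.map (phiZ n).toMonoidHom ((Fhom n (Finsupp.single p 1)).toMul))
    = Additive.ofMul (YmonUnit n (Finsupp.single p 1))
  apply congrArg
  apply Units.ext
  rw [Units.coe_map]
  show phiZ n ((Fhom n (Finsupp.single p 1)).toMul : CnZ n) = Ymon n (Finsupp.single p 1)
  rw [Fhom_single, one_zsmul, toMul_ofMul, wUnit_val]
  rw [phiZ_wElt n ((p.1 : ℕ) + 1) (by have := p.1.isLt; omega) p.2]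
  rw [dif_neg (Nat.succ_ne_zero _)]
  rfl

lemma phiZ_psi_single (g : (Fin n × ℂ) →₀ ℤ) :
    phiZ n (psi n (Ymon n g)) = Ymon n g := by
  rw [psi_Ymon]
  have h : phiZ n (((Fhom n g).toMul : (CnZ n)ˣ) : CnZ n)
      = ((Units.map (phiZ n).toMonoidHom ((Fhom n g).toMul) : (CnY n)ˣ) : CnY n) :=
    (Units.coe_map _ _).symm
  rw [h]
  exact congrArg (fun F => (((F g).toMul : (CnY n)ˣ) : CnY n)) (Thom_eq_Shom n)

lemma comp1 : (phiZ n).comp (psi n).toRingHom = RingHom.id (CnY n) := by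
  have h : ((phiZ n).comp (psi n).toRingHom).toIntAlgHom
      = (RingHom.id (CnY n)).toIntAlgHom := by
    apply AddMonoidAlgebra.algHom_ext
    intro g
    show phiZ n (psi n (AddMonoidAlgebra.single g 1)) = AddMonoidAlgebra.single g 1
    exact phiZ_psi_single n g
    exact Subsingleton.elim _ _
  exact RingHom.ext fun x => AlgHom.congr_fun h x

lemma comp2 : ((psi n).toRingHom).comp (phiZ n) = RingHom.id (CnZ n) := by
  apply Ideal.Quotient.ringHom_ext
  apply MvPolynomial.ringHom_ext
  · intro r
    show psi n (phi0 n (MvPolynomial.C r)) = Ideal.Quotient.mk _ (MvPolynomial.C r)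
    rw [show phi0 n (MvPolynomial.C r) = ((r : ℤ) : CnY n) from by simp [phi0]]
    rw [map_intCast (psi n) r]
    rw [show (MvPolynomial.C r : MvPolynomial (CnGen n) ℤ)
      = ((r : ℤ) : MvPolynomial (CnGen n) ℤ) from by simp]
    rw [map_intCast]
  · rintro ⟨s, a⟩
    cases s with
    | inl i =>
      show psi n (phi0 n (X (Sum.inl i, a))) = zmk n (Sum.inl i, a)
      rw [show phi0 n (X (Sum.inl i, a)) = Ymon n (EexpL n i a) from by
        simp [phi0]]
      exact psi_phi_inl n i a
    | inr i =>
      show psi n (phi0 n (X (Sum.inr i, a))) = zmk n (Sum.inr i, a)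
      rw [show phi0 n (X (Sum.inr i, a)) = Ymon n (EexpR n i a) from by
        simp [phi0]]
      exact psi_phi_inr n i a

end CnAux

theorem CnZ_iso_CnY (n : ℕ) :
    ∃ e : CnZ n ≃+* CnY n,
      ∀ (i : Fin n) (a : ℂ),
        (e (Ideal.Quotient.mk _ (X (Sum.inl i, a))) =
          Ymon n (Finsupp.single (i, a + (i : ℕ)) 1 -
            (if h : (i : ℕ) = 0 then 0 else
              Finsupp.single
                ((⟨(i : ℕ) - 1, by have := i.isLt; omega⟩ : Fin n),
                  a + (i : ℕ) + 1) 1))) ∧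
        (e (Ideal.Quotient.mk _ (X (Sum.inr i, a))) =
          Ymon n ((if h : (i : ℕ) = 0 then 0 else
              Finsupp.single
                ((⟨(i : ℕ) - 1, by have := i.isLt; omega⟩ : Fin n),
                  a + 2 * n - (i : ℕ) + 1) 1) -
            Finsupp.single (i, a + 2 * n - (i : ℕ) + 2) 1)) := by
  refine ⟨RingEquiv.ofRingHom (CnAux.phiZ n) (CnAux.psi n).toRingHom
    (CnAux.comp1 n) (CnAux.comp2 n), fun i a => ⟨?_, ?_⟩⟩
  · show CnAux.phiZ n (Ideal.Quotient.mk _ (X (Sum.inl i, a))) = _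
    rw [show Ideal.Quotient.mk (Ideal.span (CnRel n)) (X (Sum.inl i, a))
      = CnAux.zmk n (Sum.inl i, a) from rfl, CnAux.phiZ_zmk, CnAux.Eexp_inl, CnAux.EexpL]
  · show CnAux.phiZ n (Ideal.Quotient.mk _ (X (Sum.inr i, a))) = _
    rw [show Ideal.Quotient.mk (Ideal.span (CnRel n)) (X (Sum.inr i, a))
      = CnAux.zmk n (Sum.inr i, a) from rfl, CnAux.phiZ_zmk, CnAux.Eexp_inr, CnAux.EexpR]
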